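/- arXiv:2004.05073 — 2 statements merged into one kernel-verified Lean document; each statement's English description precedes it below -/
import Mathlib

section
/- Let P be a longest Berge path in an r-graph H, with edges e_1,...,e_t and key vertices v_0,v_1,...,v_t (so t = ℓ(H)). Then for each a ∈ {0,t}, d_H(v_a) ≤ C(|K_a(P)|, r−1) + |E^I_a(P)|; moreover equality holds if and only if N_H(v_a) is equal to the union of the family of all (r−1)-element subsets of K_a(P) and the family {e \ {v_a} : e ∈ E^I_a(P)}, and these two families are disjoint. -/
namespace Berge

variable {V : Type*} [DecidableEq V] [Fintype V]

/-- `E` is the edge set of an `r`-uniform hypergraph (`r`-graph) on `V`. -/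
def IsRGraph (r : ℕ) (E : Finset (Finset V)) : Prop :=
  ∀ e ∈ E, e.card = r

/-- The degree of a vertex: the number of edges containing it. -/
def deg (E : Finset (Finset V)) (x : V) : ℕ :=
  (E.filter fun e => x ∈ e).card

/-- The minimum degree `δ₁`. -/
noncomputable def minDeg (E : Finset (Finset V)) : ℕ :=
  sInf {d | ∃ x : V, deg E x = d}

/-- A Berge path of length `t`: distinct vertices `v 0, ..., v t` and distinct edges
`f 0, ..., f (t-1)` (here `f i` plays the role of the edge `e_{i+1}` of the paper),
with `{v i, v (i+1)} ⊆ f i`. -/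
def IsBergePath (E : Finset (Finset V)) (t : ℕ)
    (v : Fin (t + 1) → V) (f : Fin t → Finset V) : Prop :=
  Function.Injective v ∧ Function.Injective f ∧ (∀ i, f i ∈ E) ∧
    ∀ i : Fin t, v i.castSucc ∈ f i ∧ v i.succ ∈ f i

/-- `H` is connected: any two vertices are connected by a Berge path. -/
def Connected (E : Finset (Finset V)) : Prop :=
  ∀ u w : V, ∃ (t : ℕ) (v : Fin (t + 1) → V) (f : Fin t → Finset V),
    IsBergePath E t v f ∧ v 0 = u ∧ v (Fin.last t) = w

/-- `ℓ(H)`: the length of a longest Berge path. -/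
noncomputable def pathLen (E : Finset (Finset V)) : ℕ :=
  sSup {t | ∃ (v : Fin (t + 1) → V) (f : Fin t → Finset V), IsBergePath E t v f}

/-- A Berge cycle of length `t`: distinct vertices `v 0, ..., v (t-1)` and distinct
edges `f 0, ..., f (t-1)` with `{v (i-1), v i} ⊆ f i` (indices mod `t`), equivalently
`v i ∈ f i` and `v i ∈ f (i+1)` for all `i`. -/
def IsBergeCycle (E : Finset (Finset V)) (t : ℕ)
    (v : Fin t → V) (f : Fin t → Finset V) : Prop :=
  Function.Injective v ∧ Function.Injective f ∧ (∀ i, f i ∈ E) ∧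
    ∀ i : Fin t, v i ∈ f i ∧ v i ∈ f ⟨((i : ℕ) + 1) % t, Nat.mod_lt _ i.pos⟩

/-- `c(H)`: the length of a longest Berge cycle. -/
noncomputable def cycLen (E : Finset (Finset V)) : ℕ :=
  sSup {t | ∃ (v : Fin t → V) (f : Fin t → Finset V), IsBergeCycle E t v f}

/-- `E^O(P, w)`: the edges of `H` outside `P` that contain `w`. -/
def EO (E : Finset (Finset V)) {t : ℕ} (f : Fin t → Finset V) (w : V) :
    Set (Finset V) :=
  {e | e ∈ E ∧ e ∉ Set.range f ∧ w ∈ e}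

/-- `K(P, w)`: the key vertices of `P` other than `w` that lie on some edge of
`E^O(P, w)`.  For `w = v a` with `a ∈ {0, t}` this is `K_a(P)`; for `w ∉ K(P)` this
is `K_w(P)`. -/
def KsetP (E : Finset (Finset V)) {t : ℕ} (v : Fin (t + 1) → V)
    (f : Fin t → Finset V) (w : V) : Set V :=
  {x | (∃ i, v i = x) ∧ x ≠ w ∧ ∃ e ∈ EO E f w, x ∈ e}

/-- `κ(P, w)`: the set of indices of the vertices in `K(P, w)` (as integers). -/
def kappa (E : Finset (Finset V)) {t : ℕ} (v : Fin (t + 1) → V)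
    (f : Fin t → Finset V) (w : V) : Set ℤ :=
  {i : ℤ | ∃ j : Fin (t + 1), ((j : ℕ) : ℤ) = i ∧ v j ∈ KsetP E v f w}

/-- `E^I(P, w)`: the edges of `P` that contain `w`. -/
def EIset {t : ℕ} (f : Fin t → Finset V) (w : V) : Set (Finset V) :=
  {e | e ∈ Set.range f ∧ w ∈ e}

/-- `ε^i(P, w)`: the (1-based, as in the paper) indices of the edges of `P`
containing `w`, as integers; so `i ∈ ε^i(P, w)` iff `w ∈ e_i = f (i-1)`. -/
def epsi {t : ℕ} (f : Fin t → Finset V) (w : V) : Set ℤ :=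
  {i : ℤ | ∃ j : Fin t, ((j : ℕ) : ℤ) + 1 = i ∧ w ∈ f j}

/-- `N_H(x) = {T : T ∪ {x} ∈ E(H)}` (with `x ∉ T`). -/
def NH (E : Finset (Finset V)) (x : V) : Set (Finset V) :=
  {T | x ∉ T ∧ insert x T ∈ E}

/-- The edge set of `S_r(n, k)` on the vertex set `V` (`|V| = n`), where `A ⊆ V` is
the distinguished `k`-set: all `r`-sets `e` with `|e ∩ (V \ A)| ≤ 1`. -/
def Sr (r : ℕ) (A : Finset V) : Finset (Finset V) :=
  Finset.univ.filter fun e : Finset V => e.card = r ∧ (e \ A).card ≤ 1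

/-- The edge set of `S'_r(n, k)`: all `r`-sets `e` with `|e ∩ (V \ A)| = 1`. -/
def Sr' (r : ℕ) (A : Finset V) : Finset (Finset V) :=
  Finset.univ.filter fun e : Finset V => e.card = r ∧ (e \ A).card = 1

/-- The edge set of `S(sK^r_{k+1}, 1)` determined by the cliques `B 0, ..., B (s-1)`:
all `r`-subsets of some `B i`. -/
def SK (r : ℕ) {s : ℕ} (B : Fin s → Finset V) : Finset (Finset V) :=
  Finset.univ.filter fun e : Finset V => e.card = r ∧ ∃ i, e ⊆ B i

/-- `H` is isomorphic to `S(sK^r_{k+1}, 1)`: there are `s` cliques of size `k+1`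
pairwise meeting exactly in a common center `c` and covering `V`, and the edges of
`H` are exactly the `r`-subsets of the cliques. -/
def IsStarOfCliques (r k s : ℕ) (E : Finset (Finset V)) : Prop :=
  ∃ (c : V) (B : Fin s → Finset V),
    (∀ i, (B i).card = k + 1) ∧ (∀ i, c ∈ B i) ∧
    (∀ i j, i ≠ j → B i ∩ B j = {c}) ∧
    Finset.univ.biUnion B = Finset.univ ∧
    E = SK r B


section Aux

lemma snoc_inj {n : ℕ} {α : Type*} {x : Fin n → α} {a : α}
    (hx : Function.Injective x) (ha : a ∉ Set.range x) :
    Function.Injective (Fin.snoc x a : Fin (n + 1) → α) := by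
  intro i j h
  induction i using Fin.lastCases with
  | last =>
    induction j using Fin.lastCases with
    | last => rfl
    | cast j =>
      rw [Fin.snoc_last, Fin.snoc_castSucc] at h
      exact absurd ⟨j, h.symm⟩ ha
  | cast i =>
    induction j using Fin.lastCases with
    | last =>
      rw [Fin.snoc_castSucc, Fin.snoc_last] at h
      exact absurd ⟨i, h⟩ ha
    | cast j =>
      rw [Fin.snoc_castSucc, Fin.snoc_castSucc] at h
      exact congrArg Fin.castSucc (hx h)

lemma bddAbove_pathSet {V : Type*} [DecidableEq V] [Fintype V] (E : Finset (Finset V)) :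
    BddAbove {t | ∃ (v : Fin (t + 1) → V) (f : Fin t → Finset V), IsBergePath E t v f} := by
  refine ⟨Fintype.card V, fun t ht => ?_⟩
  obtain ⟨v, f, hv, -⟩ := ht
  have := Fintype.card_le_of_injective v hv
  simp only [Fintype.card_fin] at this
  omega

/-- Every vertex of an edge outside a longest path, through an endpoint,
is a key vertex. -/
lemma key_of_mem_EO {V : Type*} [DecidableEq V] [Fintype V] {t : ℕ}
    (E : Finset (Finset V))
    (v : Fin (t + 1) → V) (f : Fin t → Finset V) (hP : IsBergePath E t v f)
    (hlong : pathLen E = t) (a : Fin (t + 1)) (ha : a = 0 ∨ a = Fin.last t)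
    {e : Finset V} (he : e ∈ E) (hef : e ∉ Set.range f) (hae : v a ∈ e)
    {x : V} (hx : x ∈ e) (hxa : x ≠ v a) : ∃ i, v i = x := by
  by_contra hk
  push_neg at hk
  have hxr : x ∉ Set.range v := by rintro ⟨i, hi⟩; exact hk i hi
  obtain ⟨hv, hf, hfe, hvf⟩ := hP
  have hlonger : (t + 1) ∈
      {t | ∃ (v : Fin (t + 1) → V) (f : Fin t → Finset V), IsBergePath E t v f} := by
    rcases ha with ha | ha
    · -- prepend at the beginning
      refine ⟨Fin.cons x v, Fin.cons e f, ?_, ?_, ?_, ?_⟩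
      · exact Fin.cons_injective_iff.2 ⟨hxr, hv⟩
      · intro i j h
        induction i using Fin.cases with
        | zero =>
          induction j using Fin.cases with
          | zero => rfl
          | succ j =>
            rw [Fin.cons_zero, Fin.cons_succ] at h
            exact absurd ⟨j, h.symm⟩ hef
        | succ i =>
          induction j using Fin.cases with
          | zero =>
            rw [Fin.cons_succ, Fin.cons_zero] at h
            exact absurd ⟨i, h⟩ hef
          | succ j =>
            rw [Fin.cons_succ, Fin.cons_succ] at h
            exact congrArg Fin.succ (hf h)
      · intro i
        induction i using Fin.cases with
        | zero => simpa using he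
        | succ i => simpa using hfe i
      · intro i
        induction i using Fin.cases with
        | zero =>
          refine ⟨?_, ?_⟩
          · rw [Fin.castSucc_zero, Fin.cons_zero, Fin.cons_zero]
            exact hx
          · rw [Fin.cons_zero, Fin.cons_succ]
            rw [ha] at hae
            exact hae
        | succ i =>
          refine ⟨?_, ?_⟩
          · rw [Fin.cons_succ, ← Fin.succ_castSucc, Fin.cons_succ]
            exact (hvf i).1
          · rw [Fin.cons_succ, Fin.cons_succ]
            exact (hvf i).2
    · -- append at the end
      refine ⟨Fin.snoc v x, Fin.snoc f e, ?_, ?_, ?_, ?_⟩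
      · exact snoc_inj hv hxr
      · exact snoc_inj hf hef
      · intro i
        induction i using Fin.lastCases with
        | last => rw [Fin.snoc_last]; exact he
        | cast i => rw [Fin.snoc_castSucc]; exact hfe i
      · intro i
        induction i using Fin.lastCases with
        | last =>
          refine ⟨?_, ?_⟩
          · rw [Fin.snoc_last, Fin.snoc_castSucc]
            rw [ha] at hae
            exact hae
          · rw [Fin.snoc_last, Fin.succ_last, Fin.snoc_last]
            exact hx
        | cast i =>
          refine ⟨?_, ?_⟩
          · rw [Fin.snoc_castSucc, Fin.snoc_castSucc]
            exact (hvf i).1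
          · rw [Fin.snoc_castSucc, Fin.succ_castSucc, Fin.snoc_castSucc]
            exact (hvf i).2
  have hle := le_csSup (bddAbove_pathSet E) hlonger
  rw [pathLen] at hlong
  omega

end Aux

/-- **Corollary (Statement 8).** Let `P` be a longest Berge path in an `r`-graph `H`,
with edges `f 0, ..., f (t-1)` and key vertices `v 0, ..., v t` (so `t = ℓ(H)`).
Then for `a ∈ {0, t}`, `d_H(v a) ≤ C(|K_a(P)|, r-1) + |E^I_a(P)|`, with equality iff
`N_H(v a)` is the union of all `(r-1)`-subsets of `K_a(P)` and
`{e \ {v a} : e ∈ E^I_a(P)}`, and these two families are disjoint. -/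
theorem degree_le_choose_add_EI {V : Type*} [DecidableEq V] [Fintype V]
    (r t : ℕ) (E : Finset (Finset V)) (hE : IsRGraph r E)
    (v : Fin (t + 1) → V) (f : Fin t → Finset V)
    (hP : IsBergePath E t v f) (hlong : pathLen E = t)
    (a : Fin (t + 1)) (ha : a = 0 ∨ a = Fin.last t) :
    deg E (v a) ≤ ((KsetP E v f (v a)).ncard).choose (r - 1) + (EIset f (v a)).ncard ∧
      (deg E (v a)
          = ((KsetP E v f (v a)).ncard).choose (r - 1) + (EIset f (v a)).ncard ↔
        NH E (v a)
            = {T : Finset V | (↑T : Set V) ⊆ KsetP E v f (v a) ∧ T.card = r - 1}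
              ∪ ((fun e => e.erase (v a)) '' EIset f (v a)) ∧
          {T : Finset V | (↑T : Set V) ⊆ KsetP E v f (v a) ∧ T.card = r - 1}
              ∩ ((fun e => e.erase (v a)) '' EIset f (v a)) = ∅) := by
  obtain ⟨hv, hf, hfe, hvf⟩ := hP
  set w := v a with hw
  -- the neighbourhood as the image of the edges through `w`
  have hND : NH E w = ↑((E.filter fun e => w ∈ e).image fun e => e.erase w) := by
    ext T
    simp only [Finset.coe_image, Set.mem_image, Finset.mem_coe, Finset.mem_filter, NH,
      Set.mem_setOf_eq]
    constructor
    · rintro ⟨hT, hTE⟩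
      exact ⟨insert w T, ⟨hTE, Finset.mem_insert_self _ _⟩, Finset.erase_insert hT⟩
    · rintro ⟨e, ⟨heE, hwe⟩, rfl⟩
      exact ⟨Finset.notMem_erase _ _, by rw [Finset.insert_erase hwe]; exact heE⟩
  have hNcard : (NH E w).ncard = deg E w := by
    rw [hND, Set.ncard_coe_finset, deg]
    apply Finset.card_image_of_injOn
    intro e he e' he' h
    simp only [Finset.mem_coe, Finset.mem_filter] at he he'
    dsimp only at h
    rw [← Finset.insert_erase he.2, h, Finset.insert_erase he'.2]
  set K := KsetP E v f w with hK
  set A : Set (Finset V) := {T : Finset V | (↑T : Set V) ⊆ K ∧ T.card = r - 1} with hA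
  set B : Set (Finset V) := (fun e => e.erase w) '' EIset f w with hB
  have hNsub : NH E w ⊆ A ∪ B := by
    rintro T ⟨hT, hTE⟩
    by_cases hrange : insert w T ∈ Set.range f
    · right
      exact ⟨insert w T, ⟨hrange, Finset.mem_insert_self _ _⟩, Finset.erase_insert hT⟩
    · left
      have heO : insert w T ∈ EO E f w := ⟨hTE, hrange, Finset.mem_insert_self _ _⟩
      constructor
      · intro x hxT
        have hxT' : x ∈ T := hxT
        have hxe : x ∈ insert w T := Finset.mem_insert_of_mem hxT'
        have hxw : x ≠ w := fun h => hT (h ▸ hxT')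
        have hkey : ∃ i, v i = x :=
          key_of_mem_EO E v f ⟨hv, hf, hfe, hvf⟩ hlong a ha hTE hrange
            (Finset.mem_insert_self _ _) hxe hxw
        exact ⟨hkey, hxw, insert w T, heO, hxe⟩
      · have hc := hE _ hTE
        rw [Finset.card_insert_of_notMem hT] at hc
        omega
  have hKfin : K.Finite := Set.toFinite _
  have hAcard : A.ncard = K.ncard.choose (r - 1) := by
    have hAeq : A = ↑(hKfin.toFinset.powersetCard (r - 1)) := by
      ext T
      simp only [hA, Finset.mem_coe, Finset.mem_powersetCard, Set.mem_setOf_eq]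
      constructor
      · rintro ⟨h1, h2⟩
        exact ⟨fun x hx => hKfin.mem_toFinset.2 (h1 hx), h2⟩
      · rintro ⟨h1, h2⟩
        exact ⟨fun x hx => hKfin.mem_toFinset.1 (h1 hx), h2⟩
    rw [hAeq, Set.ncard_coe_finset, Finset.card_powersetCard,
      Set.ncard_eq_toFinset_card _ hKfin]
  have hBcard : B.ncard = (EIset f w).ncard := by
    apply Set.ncard_image_of_injOn
    rintro e ⟨-, hwe⟩ e' ⟨-, hwe'⟩ h
    dsimp only at h
    rw [← Finset.insert_erase hwe, h, Finset.insert_erase hwe']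
  have hUnion : (A ∪ B).ncard + (A ∩ B).ncard = A.ncard + B.ncard :=
    Set.ncard_union_add_ncard_inter A B (Set.toFinite _) (Set.toFinite _)
  have hle1 : (NH E w).ncard ≤ (A ∪ B).ncard := Set.ncard_le_ncard hNsub (Set.toFinite _)
  refine ⟨?_, ?_, ?_⟩
  · calc deg E w = (NH E w).ncard := hNcard.symm
      _ ≤ (A ∪ B).ncard := hle1
      _ ≤ A.ncard + B.ncard := by omega
      _ = K.ncard.choose (r - 1) + (EIset f w).ncard := by rw [hAcard, hBcard]
  · intro h
    have hN2 : (NH E w).ncard = A.ncard + B.ncard := by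
      rw [hNcard, h, hAcard, hBcard]
    have hint : (A ∩ B).ncard = 0 := by omega
    have hABempty : A ∩ B = ∅ := (Set.ncard_eq_zero (Set.toFinite _)).1 hint
    have hNA : NH E w = A ∪ B :=
      Set.eq_of_subset_of_ncard_le hNsub (by omega) (Set.toFinite _)
    exact ⟨hNA, hABempty⟩
  · rintro ⟨hNA, hAB⟩
    have hint : (A ∩ B).ncard = 0 := by rw [hAB]; simp
    have hU : (A ∪ B).ncard = A.ncard + B.ncard := by omega
    rw [← hNcard, hNA, hU, hAcard, hBcard]

end Berge
end

section
/- Suppose k ≥ r ≥ 2, t ≤ 2k, and H is a connected r-graph on n vertices with ℓ(H) = t and n > t+1. Let P be a longest Berge path in H with edges e_1,...,e_t and key vertices v_0,v_1,...,v_t. Then for every i ∈ κ_0(P) and j ∈ κ_t(P): if i ≤ j then v_{j+1} ∉ e_i and v_{i−1} ∉ e_{j+1}; and if i > j then v_{j−1} ∉ e_i and v_{j+1} ∉ e_{i+1}. -/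
namespace Berge

variable {V : Type*} [DecidableEq V] [Fintype V]

private lemma vmem {t : ℕ} {v : Fin (t + 1) → V} {S : Finset V} {b : ℕ} {hb : b < t + 1}
    (h : v ⟨b, hb⟩ ∈ S) (a : ℕ) (ha : a < t + 1) (hab : a = b) : v ⟨a, ha⟩ ∈ S := by
  subst hab; exact h

private lemma pmem1 {E : Finset (Finset V)} {t : ℕ} {v : Fin (t + 1) → V} {f : Fin t → Finset V}
    (hP : IsBergePath E t v f) (a b : ℕ) (ha : a < t + 1) (hb : b < t) (hab : a = b) :
    v ⟨a, ha⟩ ∈ f ⟨b, hb⟩ := by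
  subst hab; exact (hP.2.2.2 ⟨a, hb⟩).1

private lemma pmem2 {E : Finset (Finset V)} {t : ℕ} {v : Fin (t + 1) → V} {f : Fin t → Finset V}
    (hP : IsBergePath E t v f) (a b : ℕ) (ha : a < t + 1) (hb : b < t) (hab : a = b + 1) :
    v ⟨a, ha⟩ ∈ f ⟨b, hb⟩ := by
  subst hab; exact (hP.2.2.2 ⟨b, hb⟩).2

private lemma mod_cancel {n m a b : ℕ} (ha : a < n) (hb : b < n)
    (h : (m + a) % n = (m + b) % n) : a = b := by
  have h2 : a % n = b % n := Nat.ModEq.add_left_cancel' m h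
  rwa [Nat.mod_eq_of_lt ha, Nat.mod_eq_of_lt hb] at h2

private lemma no_long_path {E : Finset (Finset V)} {t : ℕ} (hlen : pathLen E = t)
    {p : Fin (t + 2) → V} {q : Fin (t + 1) → Finset V} (h : IsBergePath E (t + 1) p q) :
    False := by
  have hmem : (t + 1) ∈ {s | ∃ (v : Fin (s + 1) → V) (f : Fin s → Finset V), IsBergePath E s v f} := ⟨p, q, h⟩
  have hbdd : BddAbove {s | ∃ (v : Fin (s + 1) → V) (f : Fin s → Finset V), IsBergePath E s v f} := by
    refine ⟨Fintype.card V, fun s hs => ?_⟩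
    obtain ⟨v, f, hp⟩ := hs
    have := Fintype.card_le_of_injective v hp.1
    simp only [Fintype.card_fin] at this
    omega
  have hle := le_csSup hbdd hmem
  unfold pathLen at hlen
  omega
private lemma cycle_to_path {E : Finset (Finset V)} {c : ℕ} {u : Fin (c + 1) → V}
    {F : Fin (c + 1) → Finset V} (hC : IsBergeCycle E (c + 1) u F) {g : Finset V}
    (hg : g ∈ E) {y : V} (hy : y ∈ g) (hyu : ∀ s, u s ≠ y) (m : Fin (c + 1))
    (hm : u m ∈ g) (hcase : g = F m ∨ ∀ s, F s ≠ g) :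
    ∃ (p : Fin (c + 2) → V) (q : Fin (c + 1) → Finset V), IsBergePath E (c + 1) p q := by
  obtain ⟨huinj, hFinj, hFE, hinc⟩ := hC
  refine ⟨fun s => if (s : ℕ) = 0 then y else
      u ⟨((m : ℕ) + (s : ℕ) - 1) % (c + 1), Nat.mod_lt _ (Nat.succ_pos c)⟩,
    fun s => if (s : ℕ) = 0 then g else
      F ⟨((m : ℕ) + (s : ℕ)) % (c + 1), Nat.mod_lt _ (Nat.succ_pos c)⟩, ?_, ?_, ?_, ?_⟩
  · intro a b h
    have ha := a.isLt; have hb := b.isLt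
    dsimp only at h
    split_ifs at h with h1 h2 h2
    · exact Fin.ext (by omega)
    · exact absurd h.symm (hyu _)
    · exact absurd h (hyu _)
    · have h3 := congrArg Fin.val (huinj h)
      simp only at h3
      have h4 : (m : ℕ) + (a : ℕ) - 1 = (m : ℕ) + ((a : ℕ) - 1) := by omega
      have h5 : (m : ℕ) + (b : ℕ) - 1 = (m : ℕ) + ((b : ℕ) - 1) := by omega
      rw [h4, h5] at h3
      have := mod_cancel (n := c + 1) (by omega) (by omega) h3
      exact Fin.ext (by omega)
  · intro a b h
    have ha := a.isLt; have hb := b.isLt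
    dsimp only at h
    split_ifs at h with h1 h2 h2
    · exact Fin.ext (by omega)
    · -- g = F ⟨(m+b) % (c+1), _⟩
      rcases hcase with hc1 | hc2
      · rw [hc1] at h
        have h3 := congrArg Fin.val (hFinj h)
        simp only at h3
        have h4 : ((m : ℕ) + 0) % (c + 1) = ((m : ℕ) + (b : ℕ)) % (c + 1) := by
          show (m : ℕ) % (c + 1) = _
          exact (Nat.mod_eq_of_lt m.isLt).trans h3
        have := mod_cancel (n := c + 1) (Nat.succ_pos c) hb h4
        omega
      · exact absurd h.symm (hc2 _)
    · rcases hcase with hc1 | hc2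
      · rw [hc1] at h
        have h3 := congrArg Fin.val (hFinj h)
        simp only at h3
        have h4 : ((m : ℕ) + (a : ℕ)) % (c + 1) = ((m : ℕ) + 0) % (c + 1) := by
          show _ = (m : ℕ) % (c + 1)
          exact h3.trans (Nat.mod_eq_of_lt m.isLt).symm
        have := mod_cancel (n := c + 1) ha (Nat.succ_pos c) h4
        omega
      · exact absurd h (hc2 _)
    · have h3 := congrArg Fin.val (hFinj h)
      simp only at h3
      have := mod_cancel (n := c + 1) (by omega) (by omega) h3
      exact Fin.ext (by omega)
  · intro s
    dsimp only
    split_ifs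
    · exact hg
    · exact hFE _
  · intro i
    have hi := i.isLt
    have hc1 : ((i.castSucc : Fin (c + 2)) : ℕ) = (i : ℕ) := rfl
    have hc2 : ((i.succ : Fin (c + 2)) : ℕ) = (i : ℕ) + 1 := rfl
    dsimp only
    rw [hc1, hc2]
    by_cases h0 : (i : ℕ) = 0
    · rw [if_pos h0, if_pos h0, if_neg (by omega)]
      constructor
      · exact hy
      · have h5 : ((m : ℕ) + ((i : ℕ) + 1) - 1) % (c + 1) = (m : ℕ) := by
          rw [h0]; simp [Nat.mod_eq_of_lt m.isLt]
        have h6 : (⟨((m : ℕ) + ((i : ℕ) + 1) - 1) % (c + 1), Nat.mod_lt _ (Nat.succ_pos c)⟩ : Fin (c + 1)) = m := Fin.ext h5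
        rw [h6]
        exact hm
    · rw [if_neg h0, if_neg h0, if_neg (by omega)]
      constructor
      · -- u ((m+i-1)%n) ∈ F ((m+i)%n)
        have := (hinc ⟨((m : ℕ) + (i : ℕ) - 1) % (c + 1), Nat.mod_lt _ (Nat.succ_pos c)⟩).2
        have h5 : ((((m : ℕ) + (i : ℕ) - 1) % (c + 1) : ℕ) + 1) % (c + 1)
            = ((m : ℕ) + (i : ℕ)) % (c + 1) := by
          rw [Nat.mod_add_mod]
          congr 1
          omega
        simpa only [h5] using this
      · -- u ((m+(i+1)-1)%n) = u ((m+i)%n) ∈ F ((m+i)%n)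
        have h5 : (m : ℕ) + ((i : ℕ) + 1) - 1 = (m : ℕ) + (i : ℕ) := by omega
        simp only [h5]
        exact (hinc _).1
private lemma exists_attach {E : Finset (Finset V)} (hconn : Connected E) {c : ℕ}
    {u : Fin (c + 1) → V} {F : Fin (c + 1) → Finset V} (hC : IsBergeCycle E (c + 1) u F)
    {y0 : V} (hy0 : ∀ s, u s ≠ y0) :
    ∃ g ∈ E, ∃ y, y ∈ g ∧ (∀ s, u s ≠ y) ∧
      ∃ m, u m ∈ g ∧ (g = F m ∨ ∀ s, F s ≠ g) := by
  classical
  obtain ⟨tq, w, q, hQ, hw0, hwlast⟩ := hconn y0 (u 0)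
  set P : ℕ → Prop := fun i => ∃ h : i < tq + 1, ∃ m, u m = w ⟨i, h⟩ with hPdef
  have hPs : P tq := ⟨Nat.lt_succ_self tq, 0, by
    rw [show (⟨tq, Nat.lt_succ_self tq⟩ : Fin (tq + 1)) = Fin.last tq from rfl, hwlast]⟩
  have hex : ∃ i, P i := ⟨tq, hPs⟩
  let m0 := Nat.find hex
  obtain ⟨hm0lt, k, hk⟩ := Nat.find_spec hex
  have hm0pos : 0 < m0 := by
    rcases Nat.eq_zero_or_pos m0 with h | h
    · exfalso
      have := hk
      rw [show (⟨m0, hm0lt⟩ : Fin (tq + 1)) = ⟨0, Nat.succ_pos tq⟩ from Fin.ext h] at this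
      have hw00 : w ⟨0, Nat.succ_pos tq⟩ = y0 := by rw [← hw0]; rfl
      rw [hw00] at this
      exact hy0 k this
    · exact h
  have hblt : m0 - 1 < tq := by omega
  set g := q ⟨m0 - 1, hblt⟩ with hgdef
  have hinc := hQ.2.2.2 ⟨m0 - 1, hblt⟩
  have hy_in : w ⟨m0 - 1, by omega⟩ ∈ g := by
    have := hinc.1
    have hcs : (Fin.castSucc (⟨m0 - 1, hblt⟩ : Fin tq)) = (⟨m0 - 1, by omega⟩ : Fin (tq + 1)) := rfl
    rwa [hcs] at this
  have hx_in : w ⟨m0, hm0lt⟩ ∈ g := by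
    have := hinc.2
    have hsc : (Fin.succ (⟨m0 - 1, hblt⟩ : Fin tq)) = (⟨m0, hm0lt⟩ : Fin (tq + 1)) :=
      Fin.ext (by simp; omega)
    rwa [hsc] at this
  refine ⟨g, hQ.2.2.1 _, w ⟨m0 - 1, by omega⟩, hy_in, ?_, ?_⟩
  · intro s hs
    have : P (m0 - 1) := ⟨by omega, s, hs⟩
    exact absurd this (Nat.find_min hex (by omega))
  · by_cases hgF : ∃ m, F m = g
    · obtain ⟨m, hm⟩ := hgF
      exact ⟨m, by rw [← hm]; exact (hC.2.2.2 m).1, Or.inl hm.symm⟩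
    · push_neg at hgF
      exact ⟨k, by rw [hk]; exact hx_in, Or.inr hgF⟩

private lemma cycle_contra {E : Finset (Finset V)} {t : ℕ} (hconn : Connected E)
    (hlen : pathLen E = t) (hn : t + 1 < Fintype.card V)
    {u : Fin (t + 1) → V} {F : Fin (t + 1) → Finset V}
    (hC : IsBergeCycle E (t + 1) u F) : False := by
  have hy0 : ∃ y0 : V, ∀ s, u s ≠ y0 := by
    by_contra h
    push_neg at h
    have hsurj : Function.Surjective u := fun y => by
      obtain ⟨s, hs⟩ := h y; exact ⟨s, hs⟩
    have := Fintype.card_le_of_surjective u hsurj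
    simp only [Fintype.card_fin] at this
    omega
  obtain ⟨y0, hy0⟩ := hy0
  obtain ⟨g, hg, y, hy, hyu, m, hm, hcase⟩ := exists_attach hconn hC hy0
  obtain ⟨p, q, hpq⟩ := cycle_to_path hC hg hy hyu m hm hcase
  exact no_long_path hlen hpq
private lemma cycle_T {E : Finset (Finset V)} {t : ℕ} {v : Fin (t + 1) → V}
    {f : Fin t → Finset V} (hP : IsBergePath E t v f)
    {e : Finset V} (he : e ∈ E) (hef : ∀ s, f s ≠ e)
    (he0 : v ⟨0, Nat.succ_pos t⟩ ∈ e) (het : v ⟨t, Nat.lt_succ_self t⟩ ∈ e) :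
    ∃ (u : Fin (t + 1) → V) (F : Fin (t + 1) → Finset V), IsBergeCycle E (t + 1) u F := by
  refine ⟨fun s => v ⟨(s : ℕ), s.isLt⟩,
    fun s => if h : (s : ℕ) = 0 then e else f ⟨(s : ℕ) - 1, by have := s.isLt; omega⟩,
    ?_, ?_, ?_, ?_⟩
  · intro a b h
    dsimp only at h
    have h2 := congrArg Fin.val (hP.1 h)
    exact Fin.ext h2
  · intro a b h
    have ha := a.isLt; have hb := b.isLt
    dsimp only at h
    split_ifs at h with h1 h2 h2
    · exact Fin.ext (by omega)
    · exact absurd h.symm (hef _)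
    · exact absurd h (hef _)
    · have h3 := congrArg Fin.val (hP.2.1 h)
      simp only at h3
      exact Fin.ext (by omega)
  · intro s
    dsimp only
    split_ifs
    · exact he
    · exact hP.2.2.1 _
  · intro i
    have hi := i.isLt
    dsimp only
    constructor
    · split_ifs with h1
      · exact vmem he0 _ _ h1
      · exact pmem2 hP _ _ _ _ (by omega)
    · by_cases hit : (i : ℕ) < t
      · rw [dif_neg (show ¬(((i : ℕ) + 1) % (t + 1) = 0) by
          rw [Nat.mod_eq_of_lt (by omega)]; omega)]
        refine pmem1 hP _ _ _ _ ?_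
        rw [Nat.mod_eq_of_lt (by omega)]
        omega
      · have hit' : (i : ℕ) = t := by omega
        rw [dif_pos (show (((i : ℕ) + 1) % (t + 1) = 0) by rw [hit']; simp)]
        exact vmem het _ _ hit'
set_option maxHeartbeats 2000000 in
private lemma cycle_AB {E : Finset (Finset V)} {t : ℕ} {v : Fin (t + 1) → V}
    {f : Fin t → Finset V} (hP : IsBergePath E t v f) {I J : ℕ}
    (hI : 1 ≤ I) (hIJ : I ≤ J) (hJ : J + 1 ≤ t)
    {e e' jp : Finset V} (he : e ∈ E) (he' : e' ∈ E) (hee' : e ≠ e')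
    (hef : ∀ s, f s ≠ e) (he'f : ∀ s, f s ≠ e')
    (he0 : v ⟨0, by omega⟩ ∈ e) (heI : v ⟨I, by omega⟩ ∈ e)
    (het' : v ⟨t, by omega⟩ ∈ e') (he'J : v ⟨J, by omega⟩ ∈ e')
    (hjp : jp = f ⟨I - 1, by omega⟩ ∨ jp = f ⟨J, by omega⟩)
    (hjp1 : v ⟨I - 1, by omega⟩ ∈ jp) (hjp2 : v ⟨J + 1, by omega⟩ ∈ jp) :
    ∃ (u : Fin (t + 1) → V) (F : Fin (t + 1) → Finset V), IsBergeCycle E (t + 1) u F := by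
  have hjpe : jp ≠ e := by rcases hjp with h | h <;> (rw [h]; exact hef _)
  have hjpe' : jp ≠ e' := by rcases hjp with h | h <;> (rw [h]; exact he'f _)
  have hjpE : jp ∈ E := by rcases hjp with h | h <;> (rw [h]; exact hP.2.2.1 _)
  have hjpf : ∀ (k : ℕ) (hk : k < t), f ⟨k, hk⟩ = jp → k = I - 1 ∨ k = J := by
    intro k hk hk2
    rcases hjp with h | h
    · left; rw [h] at hk2; have h2 := hP.2.1 hk2; rw [Fin.mk.injEq] at h2; exact h2
    · right; rw [h] at hk2; have h2 := hP.2.1 hk2; rw [Fin.mk.injEq] at h2; exact h2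
  refine ⟨fun s =>
      if h1 : (s : ℕ) < I then v ⟨(s : ℕ), s.isLt⟩
      else if h2 : (s : ℕ) ≤ I + t - J - 1 then v ⟨(s : ℕ) - I + J + 1, by have := s.isLt; omega⟩
      else v ⟨I + t - (s : ℕ), by have := s.isLt; omega⟩,
    fun s =>
      if g0 : (s : ℕ) = 0 then e
      else if g1 : (s : ℕ) < I then f ⟨(s : ℕ) - 1, by have := s.isLt; omega⟩
      else if g2 : (s : ℕ) = I then jp
      else if g3 : (s : ℕ) ≤ I + t - J - 1 then f ⟨(s : ℕ) - I + J, by have := s.isLt; omega⟩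
      else if g4 : (s : ℕ) = I + t - J then e'
      else f ⟨I + t - (s : ℕ), by have := s.isLt; omega⟩, ?_, ?_, ?_, ?_⟩
  · intro a b h
    have ha := a.isLt; have hb := b.isLt
    dsimp only at h
    split_ifs at h <;>
      (apply Fin.ext; have h2 := hP.1 h; rw [Fin.mk.injEq] at h2; omega)
  · intro a b h
    have ha := a.isLt; have hb := b.isLt
    dsimp only at h
    split_ifs at h <;>
      first
      | (apply Fin.ext; omega)
      | (exact absurd h (hef _)) | (exact absurd h.symm (hef _))
      | (exact absurd h (he'f _)) | (exact absurd h.symm (he'f _))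
      | (exact absurd h hee') | (exact absurd h.symm hee')
      | (exact absurd h hjpe) | (exact absurd h.symm hjpe)
      | (exact absurd h hjpe') | (exact absurd h.symm hjpe')
      | (apply Fin.ext; have h2 := hP.2.1 h; rw [Fin.mk.injEq] at h2; omega)
      | (apply Fin.ext; rcases hjpf _ _ h with h2 | h2 <;> omega)
      | (apply Fin.ext; rcases hjpf _ _ h.symm with h2 | h2 <;> omega)
  · intro s
    dsimp only
    split_ifs <;> first | exact he | exact he' | exact hjpE | exact hP.2.2.1 _
  · have main : ∀ a b : Fin (t + 1),
        ((b : ℕ) = (a : ℕ) ∨ (b : ℕ) = (a : ℕ) + 1 ∨ ((a : ℕ) = t ∧ (b : ℕ) = 0)) →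
        (if h1 : (a : ℕ) < I then v ⟨(a : ℕ), a.isLt⟩
         else if h2 : (a : ℕ) ≤ I + t - J - 1 then v ⟨(a : ℕ) - I + J + 1, by have := a.isLt; omega⟩
         else v ⟨I + t - (a : ℕ), by have := a.isLt; omega⟩) ∈
        (if g0 : (b : ℕ) = 0 then e
         else if g1 : (b : ℕ) < I then f ⟨(b : ℕ) - 1, by have := b.isLt; omega⟩
         else if g2 : (b : ℕ) = I then jp
         else if g3 : (b : ℕ) ≤ I + t - J - 1 then f ⟨(b : ℕ) - I + J, by have := b.isLt; omega⟩
         else if g4 : (b : ℕ) = I + t - J then e'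
         else f ⟨I + t - (b : ℕ), by have := b.isLt; omega⟩) := by
      intro a b hab
      have ha := a.isLt; have hb := b.isLt
      rcases hab with hab | hab | ⟨hab1, hab2⟩ <;> split_ifs <;>
        first
        | (exfalso; omega)
        | exact vmem he0 _ _ (by omega)
        | exact vmem heI _ _ (by omega)
        | exact vmem he'J _ _ (by omega)
        | exact vmem het' _ _ (by omega)
        | exact vmem hjp1 _ _ (by omega)
        | exact vmem hjp2 _ _ (by omega)
        | exact pmem1 hP _ _ _ _ (by omega)
        | exact pmem2 hP _ _ _ _ (by omega)
    intro i
    have hi := i.isLt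
    refine ⟨main i i (Or.inl rfl), main i _ ?_⟩
    by_cases hit : (i : ℕ) < t
    · refine Or.inr (Or.inl ?_)
      show ((i : ℕ) + 1) % (t + 1) = (i : ℕ) + 1
      exact Nat.mod_eq_of_lt (by omega)
    · refine Or.inr (Or.inr ⟨by omega, ?_⟩)
      show ((i : ℕ) + 1) % (t + 1) = 0
      have h5 : (i : ℕ) = t := by omega
      rw [h5]; simp
set_option maxHeartbeats 2000000 in
private lemma cycle_C {E : Finset (Finset V)} {t : ℕ} {v : Fin (t + 1) → V}
    {f : Fin t → Finset V} (hP : IsBergePath E t v f) {I J : ℕ}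
    (hJ1 : 1 ≤ J) (hJI : J < I) (hIt : I ≤ t)
    {e e' : Finset V} (he : e ∈ E) (he' : e' ∈ E) (hee' : e ≠ e')
    (hef : ∀ s, f s ≠ e) (he'f : ∀ s, f s ≠ e')
    (he0 : v ⟨0, by omega⟩ ∈ e) (heI : v ⟨I, by omega⟩ ∈ e)
    (het' : v ⟨t, by omega⟩ ∈ e') (he'J : v ⟨J, by omega⟩ ∈ e')
    (hjq : v ⟨J - 1, by omega⟩ ∈ f ⟨I - 1, by omega⟩) :
    ∃ (u : Fin (t + 1) → V) (F : Fin (t + 1) → Finset V), IsBergeCycle E (t + 1) u F := by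
  refine ⟨fun s =>
      if h1 : (s : ℕ) < J then v ⟨(s : ℕ), s.isLt⟩
      else if h2 : (s : ℕ) ≤ I - 1 then v ⟨I - 1 - (s : ℕ) + J, by have := s.isLt; omega⟩
      else v ⟨t + I - (s : ℕ), by have := s.isLt; omega⟩,
    fun s =>
      if g0 : (s : ℕ) = 0 then e
      else if g1 : (s : ℕ) < J then f ⟨(s : ℕ) - 1, by have := s.isLt; omega⟩
      else if g2 : (s : ℕ) = J then f ⟨I - 1, by omega⟩
      else if g3 : (s : ℕ) ≤ I - 1 then f ⟨I - 1 - (s : ℕ) + J, by have := s.isLt; omega⟩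
      else if g4 : (s : ℕ) = I then e'
      else f ⟨t + I - (s : ℕ), by have := s.isLt; omega⟩, ?_, ?_, ?_, ?_⟩
  · intro a b h
    have ha := a.isLt; have hb := b.isLt
    dsimp only at h
    split_ifs at h <;>
      (apply Fin.ext; have h2 := hP.1 h; rw [Fin.mk.injEq] at h2; omega)
  · intro a b h
    have ha := a.isLt; have hb := b.isLt
    dsimp only at h
    split_ifs at h <;>
      first
      | (apply Fin.ext; omega)
      | (exact absurd h (hef _)) | (exact absurd h.symm (hef _))
      | (exact absurd h (he'f _)) | (exact absurd h.symm (he'f _))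
      | (exact absurd h hee') | (exact absurd h.symm hee')
      | (apply Fin.ext; have h2 := hP.2.1 h; rw [Fin.mk.injEq] at h2; omega)
  · intro s
    dsimp only
    split_ifs <;> first | exact he | exact he' | exact hP.2.2.1 _
  · have main : ∀ a b : Fin (t + 1),
        ((b : ℕ) = (a : ℕ) ∨ (b : ℕ) = (a : ℕ) + 1 ∨ ((a : ℕ) = t ∧ (b : ℕ) = 0)) →
        (if h1 : (a : ℕ) < J then v ⟨(a : ℕ), a.isLt⟩
         else if h2 : (a : ℕ) ≤ I - 1 then v ⟨I - 1 - (a : ℕ) + J, by have := a.isLt; omega⟩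
         else v ⟨t + I - (a : ℕ), by have := a.isLt; omega⟩) ∈
        (if g0 : (b : ℕ) = 0 then e
         else if g1 : (b : ℕ) < J then f ⟨(b : ℕ) - 1, by have := b.isLt; omega⟩
         else if g2 : (b : ℕ) = J then f ⟨I - 1, by omega⟩
         else if g3 : (b : ℕ) ≤ I - 1 then f ⟨I - 1 - (b : ℕ) + J, by have := b.isLt; omega⟩
         else if g4 : (b : ℕ) = I then e'
         else f ⟨t + I - (b : ℕ), by have := b.isLt; omega⟩) := by
      intro a b hab
      have ha := a.isLt; have hb := b.isLt
      rcases hab with hab | hab | ⟨hab1, hab2⟩ <;> split_ifs <;>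
        first
        | (exfalso; omega)
        | exact vmem he0 _ _ (by omega)
        | exact vmem heI _ _ (by omega)
        | exact vmem he'J _ _ (by omega)
        | exact vmem het' _ _ (by omega)
        | exact vmem hjq _ _ (by omega)
        | exact pmem1 hP _ _ _ _ (by omega)
        | exact pmem2 hP _ _ _ _ (by omega)
    intro i
    have hi := i.isLt
    refine ⟨main i i (Or.inl rfl), main i _ ?_⟩
    by_cases hit : (i : ℕ) < t
    · refine Or.inr (Or.inl ?_)
      show ((i : ℕ) + 1) % (t + 1) = (i : ℕ) + 1
      exact Nat.mod_eq_of_lt (by omega)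
    · refine Or.inr (Or.inr ⟨by omega, ?_⟩)
      show ((i : ℕ) + 1) % (t + 1) = 0
      have h5 : (i : ℕ) = t := by omega
      rw [h5]; simp

set_option maxHeartbeats 2000000 in
private lemma cycle_D {E : Finset (Finset V)} {t : ℕ} {v : Fin (t + 1) → V}
    {f : Fin t → Finset V} (hP : IsBergePath E t v f) {I J : ℕ}
    (hJI : J < I) (hIt : I + 1 ≤ t)
    {e e' : Finset V} (he : e ∈ E) (he' : e' ∈ E) (hee' : e ≠ e')
    (hef : ∀ s, f s ≠ e) (he'f : ∀ s, f s ≠ e')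
    (he0 : v ⟨0, by omega⟩ ∈ e) (heI : v ⟨I, by omega⟩ ∈ e)
    (het' : v ⟨t, by omega⟩ ∈ e') (he'J : v ⟨J, by omega⟩ ∈ e')
    (hjq : v ⟨J + 1, by omega⟩ ∈ f ⟨I, by omega⟩) :
    ∃ (u : Fin (t + 1) → V) (F : Fin (t + 1) → Finset V), IsBergeCycle E (t + 1) u F := by
  refine ⟨fun s =>
      if h1 : (s : ℕ) ≤ J then v ⟨(s : ℕ), s.isLt⟩
      else if h2 : (s : ℕ) ≤ J + t - I then v ⟨t + J + 1 - (s : ℕ), by have := s.isLt; omega⟩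
      else v ⟨(s : ℕ) + I - t, by have := s.isLt; omega⟩,
    fun s =>
      if g0 : (s : ℕ) = 0 then e
      else if g1 : (s : ℕ) ≤ J then f ⟨(s : ℕ) - 1, by have := s.isLt; omega⟩
      else if g2 : (s : ℕ) = J + 1 then e'
      else if g3 : (s : ℕ) ≤ J + t - I then f ⟨t + J + 1 - (s : ℕ), by have := s.isLt; omega⟩
      else if g4 : (s : ℕ) = J + t - I + 1 then f ⟨I, by omega⟩
      else f ⟨(s : ℕ) - 1 + I - t, by have := s.isLt; omega⟩, ?_, ?_, ?_, ?_⟩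
  · intro a b h
    have ha := a.isLt; have hb := b.isLt
    dsimp only at h
    split_ifs at h <;>
      (apply Fin.ext; have h2 := hP.1 h; rw [Fin.mk.injEq] at h2; omega)
  · intro a b h
    have ha := a.isLt; have hb := b.isLt
    dsimp only at h
    split_ifs at h <;>
      first
      | (apply Fin.ext; omega)
      | (exact absurd h (hef _)) | (exact absurd h.symm (hef _))
      | (exact absurd h (he'f _)) | (exact absurd h.symm (he'f _))
      | (exact absurd h hee') | (exact absurd h.symm hee')
      | (apply Fin.ext; have h2 := hP.2.1 h; rw [Fin.mk.injEq] at h2; omega)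
  · intro s
    dsimp only
    split_ifs <;> first | exact he | exact he' | exact hP.2.2.1 _
  · have main : ∀ a b : Fin (t + 1),
        ((b : ℕ) = (a : ℕ) ∨ (b : ℕ) = (a : ℕ) + 1 ∨ ((a : ℕ) = t ∧ (b : ℕ) = 0)) →
        (if h1 : (a : ℕ) ≤ J then v ⟨(a : ℕ), a.isLt⟩
         else if h2 : (a : ℕ) ≤ J + t - I then v ⟨t + J + 1 - (a : ℕ), by have := a.isLt; omega⟩
         else v ⟨(a : ℕ) + I - t, by have := a.isLt; omega⟩) ∈
        (if g0 : (b : ℕ) = 0 then e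
         else if g1 : (b : ℕ) ≤ J then f ⟨(b : ℕ) - 1, by have := b.isLt; omega⟩
         else if g2 : (b : ℕ) = J + 1 then e'
         else if g3 : (b : ℕ) ≤ J + t - I then f ⟨t + J + 1 - (b : ℕ), by have := b.isLt; omega⟩
         else if g4 : (b : ℕ) = J + t - I + 1 then f ⟨I, by omega⟩
         else f ⟨(b : ℕ) - 1 + I - t, by have := b.isLt; omega⟩) := by
      intro a b hab
      have ha := a.isLt; have hb := b.isLt
      rcases hab with hab | hab | ⟨hab1, hab2⟩ <;> split_ifs <;>
        first
        | (exfalso; omega)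
        | exact vmem he0 _ _ (by omega)
        | exact vmem heI _ _ (by omega)
        | exact vmem he'J _ _ (by omega)
        | exact vmem het' _ _ (by omega)
        | exact vmem hjq _ _ (by omega)
        | exact pmem1 hP _ _ _ _ (by omega)
        | exact pmem2 hP _ _ _ _ (by omega)
    intro i
    have hi := i.isLt
    refine ⟨main i i (Or.inl rfl), main i _ ?_⟩
    by_cases hit : (i : ℕ) < t
    · refine Or.inr (Or.inl ?_)
      show ((i : ℕ) + 1) % (t + 1) = (i : ℕ) + 1
      exact Nat.mod_eq_of_lt (by omega)
    · refine Or.inr (Or.inr ⟨by omega, ?_⟩)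
      show ((i : ℕ) + 1) % (t + 1) = 0
      have h5 : (i : ℕ) = t := by omega
      rw [h5]; simp
set_option maxHeartbeats 1000000
/-- **Proposition (1.5) (Statement 13).** Suppose `k ≥ r ≥ 2`, `t ≤ 2k`, `H` is a
connected `r`-graph on `n > t+1` vertices with `ℓ(H) = t`, and `P` is a longest
Berge path with edges `e_i = f (i-1)` (1-based) and key vertices `v 0, ..., v t`.
Then for `i ∈ κ_0(P)` and `j ∈ κ_t(P)`: if `i ≤ j` then `v_{j+1} ∉ e_i` and
`v_{i-1} ∉ e_{j+1}`; if `i > j` then `v_{j-1} ∉ e_i` and `v_{j+1} ∉ e_{i+1}`. -/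
theorem key_vertex_not_mem_path_edge {V : Type*} [DecidableEq V] [Fintype V]
    (k r t n : ℕ) (hr2 : 2 ≤ r) (hkr : k ≥ r) (ht : t ≤ 2 * k)
    (hcard : Fintype.card V = n) (hn : n > t + 1)
    (E : Finset (Finset V)) (hE : IsRGraph r E) (hconn : Connected E)
    (hlen : pathLen E = t)
    (v : Fin (t + 1) → V) (f : Fin t → Finset V) (hP : IsBergePath E t v f) :
    ∀ i j : ℤ, i ∈ kappa E v f (v 0) → j ∈ kappa E v f (v (Fin.last t)) →
      (i ≤ j →
        (∀ (a : Fin (t + 1)) (b : Fin t),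
          ((a : ℕ) : ℤ) = j + 1 → ((b : ℕ) : ℤ) + 1 = i → v a ∉ f b) ∧
        (∀ (a : Fin (t + 1)) (b : Fin t),
          ((a : ℕ) : ℤ) = i - 1 → ((b : ℕ) : ℤ) + 1 = j + 1 → v a ∉ f b)) ∧
      (i > j →
        (∀ (a : Fin (t + 1)) (b : Fin t),
          ((a : ℕ) : ℤ) = j - 1 → ((b : ℕ) : ℤ) + 1 = i → v a ∉ f b) ∧
        (∀ (a : Fin (t + 1)) (b : Fin t),
          ((a : ℕ) : ℤ) = j + 1 → ((b : ℕ) : ℤ) + 1 = i + 1 → v a ∉ f b)) := by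
  intro i j hi hj
  have hcard' : t + 1 < Fintype.card V := by omega
  simp only [kappa, KsetP, EO, Set.mem_setOf_eq] at hi hj
  obtain ⟨iF, hiF, -, hine, e, ⟨heE, heR, hv0e⟩, hvie⟩ := hi
  obtain ⟨jF, hjF, -, hjne, e', ⟨he'E, he'R, hvte'⟩, hvje'⟩ := hj
  set I := (iF : ℕ) with hIdef
  set J := (jF : ℕ) with hJdef
  have hef : ∀ s, f s ≠ e := fun s hs => heR ⟨s, hs⟩
  have he'f : ∀ s, f s ≠ e' := fun s hs => he'R ⟨s, hs⟩
  have hI1 : 1 ≤ I := by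
    by_contra h
    exact hine (by rw [show iF = 0 from Fin.ext (by rw [Fin.val_zero]; omega)])
  have hJt : J ≠ t := by
    intro h
    exact hjne (by rw [show jF = Fin.last t from Fin.ext (by simpa using h)])
  have he0 : v ⟨0, Nat.succ_pos t⟩ ∈ e := by
    rwa [show (⟨0, Nat.succ_pos t⟩ : Fin (t + 1)) = 0 from Fin.ext (by simp)]
  have heI : v ⟨I, iF.isLt⟩ ∈ e := by rwa [Fin.eta]
  have hvt : v ⟨t, Nat.lt_succ_self t⟩ ∈ e' := by
    rwa [show (⟨t, Nat.lt_succ_self t⟩ : Fin (t + 1)) = Fin.last t from rfl]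
  have he'J : v ⟨J, jF.isLt⟩ ∈ e' := by rwa [Fin.eta]
  have hiI : (I : ℤ) = i := hiF
  have hjJ : (J : ℤ) = j := hjF
  constructor
  · intro hij
    have hIJ : I ≤ J := by omega
    constructor
    · -- v_{j+1} ∉ e_i : jump = f ⟨I-1⟩, contains v_{J+1}
      intro a b ha hb hmem
      have hJ1t : J + 1 ≤ t := by have := a.isLt; omega
      have ha' : a = ⟨J + 1, by omega⟩ := Fin.ext (show _ = J + 1 by omega)
      have hb' : b = ⟨I - 1, by omega⟩ := Fin.ext (show _ = I - 1 by omega)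
      rw [ha', hb'] at hmem
      by_cases hee : e = e'
      · obtain ⟨u, F, hC⟩ := cycle_T hP he'E he'f (by rw [← hee]; exact he0)
          (by exact hvt)
        exact cycle_contra hconn hlen hcard' hC
      · obtain ⟨u, F, hC⟩ := cycle_AB hP hI1 hIJ hJ1t heE he'E hee hef he'f
          he0 heI hvt he'J (Or.inl rfl) (pmem1 hP _ _ (by omega) (by omega) rfl) hmem
        exact cycle_contra hconn hlen hcard' hC
    · -- v_{i-1} ∉ e_{j+1} : jump = f ⟨J⟩, contains v_{I-1}
      intro a b ha hb hmem
      have hJ1t : J + 1 ≤ t := by have := b.isLt; omega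
      have ha' : a = ⟨I - 1, by omega⟩ := Fin.ext (show _ = I - 1 by omega)
      have hb' : b = ⟨J, by omega⟩ := Fin.ext (show _ = J by omega)
      rw [ha', hb'] at hmem
      by_cases hee : e = e'
      · obtain ⟨u, F, hC⟩ := cycle_T hP he'E he'f (by rw [← hee]; exact he0)
          (by exact hvt)
        exact cycle_contra hconn hlen hcard' hC
      · obtain ⟨u, F, hC⟩ := cycle_AB hP hI1 hIJ hJ1t heE he'E hee hef he'f
          he0 heI hvt he'J (Or.inr rfl) hmem (pmem2 hP _ _ (by omega) (by omega) rfl)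
        exact cycle_contra hconn hlen hcard' hC
  · intro hij
    have hJI : J < I := by omega
    constructor
    · -- v_{j-1} ∉ e_i
      intro a b ha hb hmem
      have hJ1 : 1 ≤ J := by have := a.isLt; omega
      have hIt : I ≤ t := by have := b.isLt; omega
      have ha' : a = ⟨J - 1, by omega⟩ := Fin.ext (show _ = J - 1 by omega)
      have hb' : b = ⟨I - 1, by omega⟩ := Fin.ext (show _ = I - 1 by omega)
      rw [ha', hb'] at hmem
      by_cases hee : e = e'
      · obtain ⟨u, F, hC⟩ := cycle_T hP he'E he'f (by rw [← hee]; exact he0)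
          (by exact hvt)
        exact cycle_contra hconn hlen hcard' hC
      · obtain ⟨u, F, hC⟩ := cycle_C hP hJ1 hJI hIt heE he'E hee hef he'f
          he0 heI hvt he'J hmem
        exact cycle_contra hconn hlen hcard' hC
    · -- v_{j+1} ∉ e_{i+1}
      intro a b ha hb hmem
      have hIt : I + 1 ≤ t := by have := b.isLt; omega
      have ha' : a = ⟨J + 1, by omega⟩ := Fin.ext (show _ = J + 1 by omega)
      have hb' : b = ⟨I, by omega⟩ := Fin.ext (show _ = I by omega)
      rw [ha', hb'] at hmem
      by_cases hee : e = e'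
      · obtain ⟨u, F, hC⟩ := cycle_T hP he'E he'f (by rw [← hee]; exact he0)
          (by exact hvt)
        exact cycle_contra hconn hlen hcard' hC
      · obtain ⟨u, F, hC⟩ := cycle_D hP hJI hIt heE he'E hee hef he'f
          he0 heI hvt he'J hmem
        exact cycle_contra hconn hlen hcard' hC

end Berge
end
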